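/- For every φ ∈ L²((0,∞), dξ/ξ), the function z ↦ W_{ν,0}[φ](z) = ((2ν−1)/(π Γ(2ν)))^{1/2} (1−z)^{−2ν} ∫₀^∞ ξ^{ν} exp(−(ξ/2)(1+z)/(1−z)) φ(ξ) dξ/ξ is holomorphic on the unit disk 𝔻. -/

import Mathlib

open MeasureTheory Complex Real Set

noncomputable section

/-- The measure `dξ/ξ` on `(0,∞)`. -/
def mIoi : Measure ℝ :=
  (volume.restrict (Set.Ioi (0:ℝ))).withDensity (fun ξ => ENNReal.ofReal ξ⁻¹)

/-- The weighted measure `(1-|z|²)^{2ν-2} dμ(z)` on the unit disk. -/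
def mD (ν : ℝ) : Measure ℂ :=
  (volume.restrict {z : ℂ | ‖z‖ < 1}).withDensity
    (fun z => ENNReal.ofReal ((1 - ‖z‖ ^ 2) ^ (2*ν - 2)))

/-- Generalized Laguerre polynomial `L_n^{(α)}(x)`. -/
def lag (α : ℝ) (n : ℕ) (x : ℝ) : ℝ :=
  ∑ j ∈ Finset.range (n+1),
    (-1)^j * (Real.Gamma (n + α + 1) /
      (Real.Gamma (j + α + 1) * (Nat.factorial (n - j)) * (Nat.factorial j))) * x ^ j

/-- Jacobi polynomial `P_n^{(a,b)}(x)`. -/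
def jac (a b : ℝ) (n : ℕ) (x : ℝ) : ℝ :=
  ∑ s ∈ Finset.range (n+1),
    (Real.Gamma (n + a + 1) / (Real.Gamma (a + s + 1) * (Nat.factorial (n - s)))) *
    (Real.Gamma (n + b + 1) / (Real.Gamma (n + b - s + 1) * (Nat.factorial s))) *
    ((x - 1)/2)^s * ((x + 1)/2)^(n - s)

/-- The eigenfunctions `φ_k^{ν,m}`. -/
def phiE (ν : ℝ) (m k : ℕ) (z : ℂ) : ℂ :=
  (-1)^(min m k) * ((((1 - ‖z‖ ^ 2) ^ m)⁻¹ : ℝ) : ℂ) *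
    (if k ≤ m then (starRingEnd ℂ z)^(m - k) else z^(k - m)) *
    ((jac ((max m k - min m k : ℕ) : ℝ) (2*(ν - m) - 1) (min m k)
        (1 - 2 * ‖z‖ ^ 2) : ℝ) : ℂ)

/-- The square norms `ρ_k^{ν,m}`. -/
def rhoN (ν : ℝ) (m k : ℕ) : ℝ :=
  (π / (2*(ν - m) - 1)) *
    ((Nat.factorial (max m k)) * Real.Gamma (2*(ν - m) + min m k)) /
    ((Nat.factorial (min m k)) * Real.Gamma (2*(ν - m) + max m k))

/-- The Laguerre basis functions `ψ_{ν,m;k}` of `L²((0,∞), dξ/ξ)`. -/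
def psiF (ν : ℝ) (m k : ℕ) (ξ : ℝ) : ℝ :=
  Real.sqrt (Nat.factorial k / Real.Gamma (2*(ν - m) + k)) * ξ ^ (ν - (m:ℝ)) *
    Real.exp (-ξ/2) * lag (2*(ν - m) - 1) k ξ

/-- The kernel of the integral defining the generalized second Bargmann transform. -/
def WKer (ν : ℝ) (m : ℕ) (z : ℂ) (ξ : ℝ) : ℂ :=
  ((ξ ^ (ν - (m:ℝ)) : ℝ) : ℂ) *
    Complex.exp (-(ξ:ℂ)/2 * ((1 + z)/(1 - z))) *
    ((lag (2*(ν - m) - 1) m (ξ * (1 - ‖z‖ ^ 2) / ‖1 - z‖ ^ 2) : ℝ) : ℂ)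

/-- The generalized second Bargmann transform `W_{ν,m}`. -/
def W (ν : ℝ) (m : ℕ) (φ : ℝ → ℂ) (z : ℂ) : ℂ :=
  (Real.sqrt ((2*(ν - m) - 1) * Nat.factorial m / (π * Real.Gamma (2*ν - m))) : ℂ) *
  (((‖1 - z‖ / (1 - ‖z‖ ^ 2)) ^ (2*m) : ℝ) : ℂ) *
  (1 - z) ^ ((-(2*ν) : ℝ) : ℂ) *
  ∫ ξ, WKer ν m z ξ * φ ξ ∂mIoi

/-- The coherent state wave functions `Ψ_{ν,m;z}`. -/
def PsiCS (ν : ℝ) (m : ℕ) (z : ℂ) (ξ : ℝ) : ℂ :=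
  (-1)^m * (Real.sqrt (Nat.factorial m / Real.Gamma (2*ν - m)) : ℂ) *
  ((‖1 - z‖ ^ (2*m) : ℝ) : ℂ) * (1 - z) ^ ((-(2*ν) : ℝ) : ℂ) *
  (((1 - ‖z‖ ^ 2) ^ (ν - (m:ℝ)) : ℝ) : ℂ) * ((ξ ^ (ν - (m:ℝ)) : ℝ) : ℂ) *
  Complex.exp (-(ξ:ℂ)/2 * ((1 + z)/(1 - z))) *
  ((lag (2*(ν - m) - 1) m (ξ * (1 - ‖z‖ ^ 2) / ‖1 - z‖ ^ 2) : ℝ) : ℂ)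

/-- The reproducing kernel `K_m^ν(z,w)`. -/
def KK (ν : ℝ) (m : ℕ) (z w : ℂ) : ℂ :=
  (((2*(ν - m) - 1) / π : ℝ) : ℂ) *
  (1 - z * (starRingEnd ℂ w)) ^ ((-(2*ν) : ℝ) : ℂ) *
  (((‖1 - z * (starRingEnd ℂ w)‖ ^ 2 /
      ((1 - ‖z‖ ^ 2) * (1 - ‖w‖ ^ 2))) ^ m : ℝ) : ℂ) *
  ((jac 0 (2*(ν - m) - 1) m
      (2 * (1 - ‖z‖ ^ 2) * (1 - ‖w‖ ^ 2) /
        ‖1 - z * (starRingEnd ℂ w)‖ ^ 2 - 1) : ℝ) : ℂ)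

/-- Wirtinger derivative `∂/∂z`. -/
def wirtZ (f : ℂ → ℂ) (z : ℂ) : ℂ :=
  (fderiv ℝ f z 1 - Complex.I * fderiv ℝ f z Complex.I) / 2

/-- Wirtinger derivative `∂/∂z̄`. -/
def wirtZbar (f : ℂ → ℂ) (z : ℂ) : ℂ :=
  (fderiv ℝ f z 1 + Complex.I * fderiv ℝ f z Complex.I) / 2

/-- The magnetic Schrödinger-type operator `H_ν`. -/
def Hop (ν : ℝ) (f : ℂ → ℂ) (z : ℂ) : ℂ :=
  -4 * (((1 - ‖z‖ ^ 2 : ℝ)) : ℂ) *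
    ((((1 - ‖z‖ ^ 2 : ℝ)) : ℂ) * wirtZ (wirtZbar f) z
      - 2*(ν:ℂ) * (starRingEnd ℂ z) * wirtZbar f z)

end

open MeasureTheory Complex Real Set in
private lemma mIoi_ae_pos : ∀ᵐ ξ ∂mIoi, 0 < ξ := by
  have h : ∀ᵐ ξ ∂(volume.restrict (Set.Ioi (0:ℝ))), ξ ∈ Set.Ioi (0:ℝ) :=
    ae_restrict_mem measurableSet_Ioi
  exact h.filter_mono (MeasureTheory.withDensity_absolutelyContinuous _ _).ae_le

open MeasureTheory Complex Real Set in
private lemma memL2_aux {a c : ℝ} (ha : 0 < a) (hc : 0 < c) :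
    MeasureTheory.MemLp (fun ξ : ℝ => ξ ^ a * Real.exp (-(c * ξ))) 2 mIoi := by
  have hmeas : Measurable (fun ξ : ℝ => ξ ^ a * Real.exp (-(c * ξ))) :=
    (Real.continuous_rpow_const ha.le).measurable.mul
      ((measurable_const.mul measurable_id).neg.exp)
  rw [memLp_two_iff_integrable_sq hmeas.aestronglyMeasurable]
  unfold mIoi
  rw [integrable_withDensity_iff (measurable_inv.ennreal_ofReal)
    (Filter.Eventually.of_forall fun x => ENNReal.ofReal_lt_top)]
  have hbase : MeasureTheory.IntegrableOn
      (fun ξ : ℝ => ξ ^ (2*a - 1) * Real.exp (-(2*c) * ξ ^ (1:ℝ))) (Set.Ioi 0) :=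
    integrableOn_rpow_mul_exp_neg_mul_rpow (by linarith) one_pos (by linarith)
  refine hbase.congr ?_
  filter_upwards [ae_restrict_mem measurableSet_Ioi] with ξ hξ
  have hξ0 : (0:ℝ) < ξ := hξ
  rw [ENNReal.toReal_ofReal (by positivity), Real.rpow_one]
  have h1 : (ξ ^ a * Real.exp (-(c * ξ))) ^ 2 = ξ ^ (a + a) * Real.exp (-(c*ξ) + -(c*ξ)) := by
    rw [mul_pow, sq, sq, ← Real.rpow_add hξ0, ← Real.exp_add]
  rw [h1, mul_assoc, mul_comm (Real.exp _), ← mul_assoc,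
    show ξ⁻¹ = ξ ^ (-1:ℝ) from (Real.rpow_neg_one ξ).symm, ← Real.rpow_add hξ0]
  congr 1
  · congr 1; ring
  · congr 1; ring

open MeasureTheory Complex Real Set in
private lemma key_int (φ : ℝ → ℂ) (hφ : MeasureTheory.MemLp φ 2 mIoi)
    {a c : ℝ} (ha : 0 < a) (hc : 0 < c) :
    MeasureTheory.Integrable (fun ξ => (ξ ^ a * Real.exp (-(c * ξ))) • φ ξ) mIoi := by
  have h := hφ.smul (memL2_aux ha hc) (p := 2) (q := 2) (r := 1)
  exact MeasureTheory.memLp_one_iff_integrable.mp h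

private lemma lag_zero {α : ℝ} (h : Real.Gamma (α + 1) ≠ 0) (x : ℝ) : lag α 0 x = 1 := by
  unfold lag
  rw [Finset.sum_range_one]
  simp only [pow_zero, one_mul, Nat.sub_zero, Nat.factorial_zero, Nat.cast_one, mul_one,
    Nat.cast_zero, zero_add]
  rw [div_self h]

open MeasureTheory Complex Real Set in
private lemma re_div_aux (z : ℂ) :
    ((1 + z) / (1 - z)).re = (1 - ‖z‖ ^ 2) / ‖1 - z‖ ^ 2 := by
  rw [Complex.div_re, ← add_div]
  congr 1
  · simp only [Complex.add_re, Complex.add_im, Complex.sub_re, Complex.sub_im,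
      Complex.one_re, Complex.one_im, Complex.sq_norm, Complex.normSq_apply]
    ring
  · exact (Complex.sq_norm _).symm

set_option maxHeartbeats 1600000 in
/-- for every `φ ∈ L²((0,∞), dξ/ξ)`, the second Bargmann transform
`W_{ν,0}[φ]` is holomorphic on the unit disk. -/
theorem stmt3 (ν : ℝ) (hν : 1 < 2*ν) (φ : ℝ → ℂ) (hφ : MeasureTheory.MemLp φ 2 mIoi) :
    DifferentiableOn ℂ (W ν 0 φ) {z : ℂ | ‖z‖ < 1} := by
  have hν0 : (0:ℝ) < ν := by linarith
  set C : ℂ := ((Real.sqrt ((2*(ν - (0:ℕ)) - 1) * Nat.factorial 0 /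
    (π * Real.Gamma (2*ν - (0:ℕ)))) : ℝ) : ℂ) with hC
  set F : ℂ → ℝ → ℂ := fun z ξ =>
    ((ξ ^ ν : ℝ) : ℂ) * Complex.exp (-(ξ:ℂ)/2 * ((1 + z)/(1 - z))) * φ ξ with hFdef
  have hΓ : Real.Gamma ((2*(ν - ((0:ℕ):ℝ)) - 1) + 1) ≠ 0 := by
    refine ne_of_gt (Real.Gamma_pos_of_pos ?_)
    push_cast
    linarith
  have hW : ∀ z, W ν 0 φ z = C * ((1 - z) ^ ((-(2*ν) : ℝ) : ℂ) * ∫ ξ, F z ξ ∂mIoi) := by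
    intro z
    unfold W WKer
    have hlag : ∀ x, lag (2*ν - 1) 0 x = 1 := by
      refine lag_zero ?_
      refine ne_of_gt (Real.Gamma_pos_of_pos ?_)
      linarith
    simp only [hlag, Complex.ofReal_one, mul_one, mul_zero, pow_zero, one_mul,
      Nat.cast_zero, sub_zero, hFdef, hC]
    rw [mul_assoc]
  refine DifferentiableOn.congr ?_ (fun z _ => hW z)
  intro z₀ hz₀
  apply DifferentiableAt.differentiableWithinAt
  simp only [Set.mem_setOf_eq] at hz₀
  set r : ℝ := (1 + ‖z₀‖)/2 with hr
  have habs0 : 0 ≤ ‖z₀‖ := norm_nonneg z₀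
  have hr1 : r < 1 := by rw [hr]; linarith
  have hr0 : 0 ≤ r := by rw [hr]; positivity
  have hz₀r : ‖z₀‖ ≤ r := by rw [hr]; linarith
  set ε : ℝ := (1 - ‖z₀‖)/2 with hε
  have hεpos : 0 < ε := by rw [hε]; linarith
  have hball : ∀ z ∈ Metric.ball z₀ ε, ‖z‖ ≤ r := by
    intro z hz
    rw [Metric.mem_ball, Complex.dist_eq] at hz
    have h1 : ‖z‖ ≤ ‖z₀‖ + ‖z - z₀‖ := by
      have := norm_add_le z₀ (z - z₀)
      simpa using this
    rw [hr]; rw [hε] at hz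
    linarith
  set c : ℝ := (1 - r^2)/8 with hc
  have hcpos : 0 < c := by rw [hc]; nlinarith
  have hfacts : ∀ z : ℂ, ‖z‖ ≤ r →
      ((1:ℂ) - z ≠ 0 ∧ 2*c ≤ ((1 + z)/(1 - z)).re ∧ 1 - r ≤ ‖1 - z‖) := by
    intro z hzr
    have habsz1 : ‖z‖ < 1 := lt_of_le_of_lt hzr hr1
    have h1zlow : 1 - r ≤ ‖1 - z‖ := by
      have h := norm_sub_norm_le (1:ℂ) z
      simp only [norm_one, map_one] at h
      linarith
    have h1zne : (1:ℂ) - z ≠ 0 := by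
      intro h
      rw [h] at h1zlow
      simp only [norm_zero] at h1zlow
      linarith
    refine ⟨h1zne, ?_, h1zlow⟩
    rw [re_div_aux]
    have hub : ‖1 - z‖ ≤ 2 := by
      have h := norm_sub_le (1:ℂ) z
      simp only [norm_one, map_one] at h
      linarith
    have hden : 0 < ‖1 - z‖ ^ 2 := by
      have : 0 < ‖1 - z‖ := by
        rcases norm_pos_iff.mpr h1zne with h'
        exact h'
      positivity
    have hnum : 1 - r^2 ≤ 1 - ‖z‖ ^ 2 := by nlinarith [norm_nonneg z]
    have h4 : ‖1 - z‖ ^ 2 ≤ 4 := by nlinarith [norm_nonneg (1 - z)]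
    have : (1 - r^2)/4 ≤ (1 - ‖z‖ ^ 2) / ‖1 - z‖^2 :=
      div_le_div₀ (by nlinarith) hnum hden h4
    rw [hc]; linarith
  -- measurability
  have hmeasF : ∀ z : ℂ, MeasureTheory.AEStronglyMeasurable (F z) mIoi := by
    intro z
    refine MeasureTheory.AEStronglyMeasurable.mul ?_ hφ.1
    apply Measurable.aestronglyMeasurable
    exact (Complex.measurable_ofReal.comp (Real.continuous_rpow_const hν0.le).measurable).mul
      (Complex.measurable_exp.comp
        ((Complex.measurable_ofReal.neg.div_const 2).mul_const _))
  set F' : ℂ → ℝ → ℂ := fun z ξ =>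
    ((ξ ^ ν : ℝ) : ℂ) *
      (Complex.exp (-(ξ:ℂ)/2 * ((1 + z)/(1 - z))) * (-(ξ:ℂ)/(1-z)^2)) * φ ξ with hF'def
  have hmeasF' : MeasureTheory.AEStronglyMeasurable (F' z₀) mIoi := by
    refine MeasureTheory.AEStronglyMeasurable.mul ?_ hφ.1
    apply Measurable.aestronglyMeasurable
    exact (Complex.measurable_ofReal.comp (Real.continuous_rpow_const hν0.le).measurable).mul
      ((Complex.measurable_exp.comp
        ((Complex.measurable_ofReal.neg.div_const 2).mul_const _)).mul
        (Complex.measurable_ofReal.neg.div_const _))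
  -- exponent real-part computation
  have hexp_re : ∀ (ξ : ℝ) (w : ℂ), (-(ξ:ℂ)/2 * w).re = -(ξ/2) * w.re := by
    intro ξ w
    have : -(ξ:ℂ)/2 = ((-(ξ/2) : ℝ) : ℂ) := by push_cast; ring
    rw [this, Complex.re_ofReal_mul]
  -- bound function
  set B : ℝ → ℝ := fun ξ => (1-r)⁻¹^2 * ‖(ξ ^ (ν+1) * Real.exp (-(c * ξ))) • φ ξ‖ with hBdef
  have hBint : MeasureTheory.Integrable B mIoi :=
    ((key_int φ hφ (by linarith) hcpos).norm.const_mul _)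
  have h1r : 0 < 1 - r := by linarith
  have h_bound : ∀ᵐ ξ ∂mIoi, ∀ z ∈ Metric.ball z₀ ε, ‖F' z ξ‖ ≤ B ξ := by
    filter_upwards [mIoi_ae_pos] with ξ hξ
    intro z hz
    obtain ⟨h1z, hre, hlow⟩ := hfacts z (hball z hz)
    have habs1z : 0 < ‖1 - z‖ := norm_pos_iff.mpr h1z
    have hnorm : ‖F' z ξ‖ =
        ξ^ν * (Real.exp (-(ξ/2) * ((1+z)/(1-z)).re) * (ξ / ‖1-z‖^2)) * ‖φ ξ‖ := by
      simp only [hF'def, norm_mul, Complex.norm_real, Real.norm_eq_abs, Complex.norm_exp,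
        norm_div, norm_neg, norm_pow, hexp_re]
      rw [_root_.abs_of_nonneg (Real.rpow_nonneg hξ.le ν), _root_.abs_of_nonneg hξ.le]
    have hBeq : B ξ = (1-r)⁻¹^2 * (ξ^ν * ξ * Real.exp (-(c*ξ)) * ‖φ ξ‖) := by
      rw [hBdef]
      simp only [norm_smul, Real.norm_eq_abs]
      rw [_root_.abs_of_nonneg (by positivity), Real.rpow_add_one (ne_of_gt hξ)]
    rw [hnorm, hBeq]
    have e1 : Real.exp (-(ξ/2) * ((1+z)/(1-z)).re) ≤ Real.exp (-(c*ξ)) := by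
      apply Real.exp_le_exp.mpr
      have hhalf : (0:ℝ) ≤ ξ/2 := by positivity
      have h1 := mul_le_mul_of_nonneg_left hre hhalf
      have h2 : ξ/2 * (2*c) = c*ξ := by ring
      rw [h2] at h1
      linarith
    have e2 : ξ / ‖1-z‖^2 ≤ (1-r)⁻¹^2 * ξ := by
      rw [inv_pow, inv_mul_eq_div]
      apply div_le_div_of_nonneg_left hξ.le (by positivity)
      nlinarith [hlow, h1r]
    calc ξ^ν * (Real.exp (-(ξ/2) * ((1+z)/(1-z)).re) * (ξ / ‖1-z‖^2)) * ‖φ ξ‖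
        ≤ ξ^ν * (Real.exp (-(c*ξ)) * ((1-r)⁻¹^2 * ξ)) * ‖φ ξ‖ := by
          have hξν : 0 ≤ ξ^ν := Real.rpow_nonneg hξ.le ν
          have hφn : 0 ≤ ‖φ ξ‖ := norm_nonneg _
          have h0 : 0 ≤ Real.exp (-(ξ/2) * ((1+z)/(1-z)).re) := Real.exp_nonneg _
          have h2 : 0 ≤ ξ / ‖1-z‖^2 := by positivity
          gcongr
      _ = (1-r)⁻¹^2 * (ξ^ν * ξ * Real.exp (-(c*ξ)) * ‖φ ξ‖) := by ring
  have h_int : MeasureTheory.Integrable (F z₀) mIoi := by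
    refine MeasureTheory.Integrable.mono' (key_int φ hφ hν0 hcpos).norm (hmeasF z₀) ?_
    filter_upwards [mIoi_ae_pos] with ξ hξ
    obtain ⟨h1z, hre, hlow⟩ := hfacts z₀ hz₀r
    have hnorm : ‖F z₀ ξ‖ = ξ^ν * Real.exp (-(ξ/2) * ((1+z₀)/(1-z₀)).re) * ‖φ ξ‖ := by
      simp only [hFdef, norm_mul, Complex.norm_real, Real.norm_eq_abs, Complex.norm_exp,
        hexp_re]
      rw [_root_.abs_of_nonneg (Real.rpow_nonneg hξ.le ν)]
    rw [hnorm]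
    have hrhs : ‖(ξ ^ ν * Real.exp (-(c * ξ))) • φ ξ‖ = ξ^ν * Real.exp (-(c*ξ)) * ‖φ ξ‖ := by
      simp only [norm_smul, Real.norm_eq_abs]
      rw [_root_.abs_of_nonneg (by positivity)]
    rw [hrhs]
    have e1 : Real.exp (-(ξ/2) * ((1+z₀)/(1-z₀)).re) ≤ Real.exp (-(c*ξ)) := by
      apply Real.exp_le_exp.mpr
      have hhalf : (0:ℝ) ≤ ξ/2 := by positivity
      have h1 := mul_le_mul_of_nonneg_left hre hhalf
      have h2 : ξ/2 * (2*c) = c*ξ := by ring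
      rw [h2] at h1
      linarith
    have hξν : 0 ≤ ξ^ν := Real.rpow_nonneg hξ.le ν
    have hφn : 0 ≤ ‖φ ξ‖ := norm_nonneg _
    gcongr
  have h_diff : ∀ᵐ ξ ∂mIoi, ∀ z ∈ Metric.ball z₀ ε, HasDerivAt (F · ξ) (F' z ξ) z := by
    refine Filter.Eventually.of_forall fun ξ => fun z hz => ?_
    obtain ⟨h1z, -, -⟩ := hfacts z (hball z hz)
    have ha : HasDerivAt (fun w : ℂ => 1 + w) 1 z := by
      simpa using (hasDerivAt_id z).const_add (1:ℂ)
    have hb : HasDerivAt (fun w : ℂ => 1 - w) (-1) z := by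
      simpa using (hasDerivAt_id z).const_sub (1:ℂ)
    have hdiv : HasDerivAt (fun w : ℂ => (1+w)/(1-w)) (2/(1-z)^2) z := by
      have h : HasDerivAt (fun w : ℂ => (1+w)/(1-w)) _ z := ha.div hb h1z
      convert h using 1
      ring
    have hg : HasDerivAt (fun w : ℂ => -(ξ:ℂ)/2 * ((1+w)/(1-w))) (-(ξ:ℂ)/(1-z)^2) z := by
      have h : HasDerivAt (fun w : ℂ => -(ξ:ℂ)/2 * ((1+w)/(1-w))) _ z := hdiv.const_mul (-(ξ:ℂ)/2)
      convert h using 1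
      ring
    exact ((hg.cexp.const_mul (((ξ ^ ν : ℝ) : ℂ))).mul_const (φ ξ))
  obtain ⟨-, hD⟩ := hasDerivAt_integral_of_dominated_loc_of_deriv_le (Metric.ball_mem_nhds z₀ hεpos)
    (Filter.Eventually.of_forall hmeasF) h_int hmeasF' h_bound hBint h_diff
  have hI : DifferentiableAt ℂ (fun z => ∫ ξ, F z ξ ∂mIoi) z₀ := hD.differentiableAt
  have hcp : DifferentiableAt ℂ (fun z : ℂ => (1 - z) ^ ((-(2*ν) : ℝ) : ℂ)) z₀ := by
    refine DifferentiableAt.cpow ((differentiableAt_const 1).sub differentiableAt_id)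
      (differentiableAt_const _) ?_
    rw [Complex.mem_slitPlane_iff]
    left
    simp only [Complex.sub_re, Complex.one_re]
    have h := Complex.re_le_norm z₀
    linarith
  exact (hcp.mul hI).const_mul C
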